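/- For a nonempty closed set C ⊆ ℝⁿ with C ≠ ℝⁿ, the set of boundary points x ∈ ∂C at which the proximal normal cone N_C^P(x) contains a nonzero vector is dense in ∂C. -/

import Mathlib

open scoped RealInnerProductSpace

/-- The proximal normal cone to a set `C ⊆ ℝⁿ` at a point `x`. -/
def proxNormalCone {n : ℕ} (C : Set (EuclideanSpace ℝ (Fin n)))
    (x : EuclideanSpace ℝ (Fin n)) : Set (EuclideanSpace ℝ (Fin n)) :=
  {p | ∃ σ : ℝ, 0 ≤ σ ∧ ∀ y ∈ C, ⟪p, y - x⟫ ≤ σ * ‖y - x‖ ^ 2}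

/-- Density in `∂C` of boundary points admitting a nonzero proximal normal. -/
theorem dense_nonzero_proxNormal {n : ℕ} (C : Set (EuclideanSpace ℝ (Fin n)))
    (hC : IsClosed C) (hne : C.Nonempty) (hproper : C ≠ Set.univ) :
    ∀ x ∈ frontier C, ∀ ε > 0, ∃ z ∈ frontier C,
      ‖z - x‖ < ε ∧ ∃ p ∈ proxNormalCone C z, p ≠ 0 := by
  intro x hx ε hε
  rw [frontier_eq_closure_inter_closure] at hx
  -- pick u ∉ C with dist x u < ε/2
  obtain ⟨u, huC, hux⟩ := Metric.mem_closure_iff.mp hx.2 (ε / 2) (by positivity)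
  -- nearest point z ∈ C to u
  obtain ⟨z, hzC, hzd⟩ := hC.exists_infDist_eq_dist hne u
  have huz_pos : 0 < dist u z := by
    rw [dist_pos]; intro h; exact huC (h ▸ hzC)
  have hzu_le : dist u z ≤ dist u x := by
    rw [← hzd]; exact Metric.infDist_le_dist_of_mem (hC.closure_subset hx.1)
  -- bound ‖z - x‖
  have hzx : ‖z - x‖ < ε := by
    rw [← dist_eq_norm]
    calc dist z x ≤ dist z u + dist u x := dist_triangle z u x
    _ ≤ dist u x + dist u x := by rw [dist_comm z u]; linarith
    _ < ε := by rw [dist_comm u x] at *; linarith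
  -- points on the open segment (z,u) are outside C
  have hseg : ∀ t : ℝ, 0 < t → t < 1 → z + t • (u - z) ∉ C := by
    intro t ht0 ht1 hmem
    have hle : dist u z ≤ dist u (z + t • (u - z)) := by
      rw [← hzd]; exact Metric.infDist_le_dist_of_mem hmem
    have heq : dist u (z + t • (u - z)) = (1 - t) * dist u z := by
      rw [dist_eq_norm, dist_eq_norm]
      have : u - (z + t • (u - z)) = (1 - t) • (u - z) := by
        rw [sub_smul, one_smul]; abel
      rw [this, norm_smul, Real.norm_eq_abs, abs_of_pos (by linarith)]
    nlinarith
  have hzfr : z ∈ frontier C := by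
    rw [frontier_eq_closure_inter_closure]
    refine ⟨subset_closure hzC, Metric.mem_closure_iff.mpr ?_⟩
    intro δ hδ
    set t : ℝ := min (δ / (2 * dist u z)) (1 / 2) with ht
    have ht0 : 0 < t := lt_min (by positivity) (by norm_num)
    have ht1 : t < 1 := lt_of_le_of_lt (min_le_right _ _) (by norm_num)
    refine ⟨z + t • (u - z), hseg t ht0 ht1, ?_⟩
    have : dist z (z + t • (u - z)) = t * dist u z := by
      rw [dist_eq_norm, dist_eq_norm]
      have h2 : z - (z + t • (u - z)) = (-t) • (u - z) := by
        rw [neg_smul]; abel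
      rw [h2, norm_smul, Real.norm_eq_abs, abs_neg, abs_of_pos ht0]
    rw [this]
    calc t * dist u z ≤ (δ / (2 * dist u z)) * dist u z :=
          mul_le_mul_of_nonneg_right (min_le_left _ _) huz_pos.le
    _ = δ / 2 := by field_simp
    _ < δ := by linarith
  refine ⟨z, hzfr, hzx, u - z, ⟨1 / 2, by norm_num, ?_⟩, ?_⟩
  · intro y hyC
    have h1 : ‖u - z‖ ≤ ‖u - y‖ := by
      rw [← dist_eq_norm, ← dist_eq_norm, ← hzd]
      exact Metric.infDist_le_dist_of_mem hyC
    have h2 : ‖u - z‖ ^ 2 ≤ ‖u - y‖ ^ 2 := pow_le_pow_left₀ (norm_nonneg _) h1 2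
    have hexp : ‖u - y‖ ^ 2 = ‖u - z‖ ^ 2 - 2 * ⟪u - z, y - z⟫ + ‖y - z‖ ^ 2 := by
      have : u - y = (u - z) - (y - z) := by abel
      rw [this, norm_sub_sq_real]
    nlinarith
  · intro h
    apply huC
    have : u = z := by rwa [sub_eq_zero] at h
    exact this ▸ hzC
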